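/- With the setup of the chance-constrained feasibility set: the set of x satisfying P(x + ξ ∈ P) ≥ 1 − η (with 0 < η ≤ 1/2, ξ ∼ N(0,Σ)) is contained in the polytope P_m = {x : ω_i^⊤ x ≤ b_i − ‖Σ^{1/2}ω_i‖₂ Φ^{-1}(1−η) for all i}. Hence adding the constraint x ∈ P_m to the chance-constrained optimization problem does not change its set of optimal solutions. -/

import Mathlib

open MeasureTheory ProbabilityTheory

open scoped ComplexOrder in
/-- The positive semidefinite square root of a positive semidefinite matrix (the definition
`Matrix.PosSemidef.sqrt` of the older Mathlib, removed since). -/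
noncomputable def Matrix.PosSemidef.sqrt {n : Type*} [Fintype n] [DecidableEq n] {𝕜 : Type*}
    [RCLike 𝕜] {A : Matrix n n 𝕜} (hA : A.PosSemidef) : Matrix n n 𝕜 :=
  (hA.1.eigenvectorUnitary : Matrix n n 𝕜) * Matrix.diagonal ((↑) ∘ (√·) ∘ hA.1.eigenvalues) *
    (star hA.1.eigenvectorUnitary : Matrix n n 𝕜)

/-- The standard normal CDF `Φ`. -/
noncomputable def stdNormalCDF : ℝ → ℝ := fun x => cdf (gaussianReal 0 1) x

/-- The standard normal quantile function `Φ⁻¹`. -/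
noncomputable def stdNormalQuantile : ℝ → ℝ := Function.invFun stdNormalCDF

lemma posSemidef_sqrt_mul_self' {n : Type*} [Fintype n] [DecidableEq n]
    {A : Matrix n n ℝ} (hA : A.PosSemidef) : hA.sqrt * hA.sqrt = A := by
  unfold Matrix.PosSemidef.sqrt
  conv_rhs => rw [hA.1.spectral_theorem, Unitary.conjStarAlgAut_apply]
  have hu : (star hA.1.eigenvectorUnitary : Matrix n n ℝ) * (hA.1.eigenvectorUnitary : Matrix n n ℝ)
      = 1 := Unitary.coe_star_mul_self _
  have hd : Matrix.diagonal ((RCLike.ofReal ∘ (√·) ∘ hA.1.eigenvalues) : n → ℝ)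
      * Matrix.diagonal ((RCLike.ofReal ∘ (√·) ∘ hA.1.eigenvalues) : n → ℝ)
      = Matrix.diagonal (RCLike.ofReal ∘ hA.1.eigenvalues) := by
    rw [Matrix.diagonal_mul_diagonal]; congr 1; funext j
    simp [Real.mul_self_sqrt (hA.eigenvalues_nonneg j)]
  calc _ = (hA.1.eigenvectorUnitary : Matrix n n ℝ)
        * Matrix.diagonal ((RCLike.ofReal ∘ (√·) ∘ hA.1.eigenvalues) : n → ℝ)
        * ((star hA.1.eigenvectorUnitary : Matrix n n ℝ) * (hA.1.eigenvectorUnitary : Matrix n n ℝ))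
        * Matrix.diagonal ((RCLike.ofReal ∘ (√·) ∘ hA.1.eigenvalues) : n → ℝ)
        * (star hA.1.eigenvectorUnitary : Matrix n n ℝ) := by simp only [Matrix.mul_assoc]
    _ = _ := by rw [hu, Matrix.mul_one, Matrix.mul_assoc _ (Matrix.diagonal _) (Matrix.diagonal _), hd]

lemma stdNormalCDF_eq : stdNormalCDF = ⇑(cdf (gaussianReal 0 1)) := rfl

lemma stdNormalCDF_monotone : Monotone stdNormalCDF := by
  rw [stdNormalCDF_eq]; exact monotone_cdf _

lemma gaussianReal_std_singleton (x : ℝ) : gaussianReal 0 1 {x} = 0 :=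
  gaussianReal_absolutelyContinuous 0 one_ne_zero (by simp)

lemma stdNormalCDF_continuous : Continuous stdNormalCDF := by
  rw [stdNormalCDF_eq, continuous_iff_continuousAt]
  intro x
  set f : ℝ → ℝ := ⇑(cdf (gaussianReal 0 1)) with hf
  have hmono : Monotone f := monotone_cdf _
  rw [hmono.continuousAt_iff_leftLim_eq_rightLim]
  have hright : Function.rightLim f x = f x := by
    refine hmono.continuousWithinAt_Ioi_iff_rightLim_eq.1 ?_
    exact ((cdf (gaussianReal 0 1)).right_continuous x).mono Set.Ioi_subset_Ici_self
  have hsing : (cdf (gaussianReal 0 1)).measure {x} = 0 := by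
    rw [measure_cdf]; exact gaussianReal_std_singleton x
  rw [StieltjesFunction.measure_singleton] at hsing
  have hle : Function.leftLim f x ≤ f x := hmono.leftLim_le le_rfl
  have hd : f x - Function.leftLim f x ≤ 0 := by
    by_contra h
    push_neg at h
    rw [ENNReal.ofReal_eq_zero] at hsing
    exact absurd hsing (not_le.2 h)
  have hleft : Function.leftLim f x = f x := le_antisymm hle (by linarith)
  rw [hleft, hright]

lemma stdNormalCDF_strictMono : StrictMono stdNormalCDF := by
  intro x y hxy
  have hlt : (gaussianReal 0 1) (Set.Iic x) < (gaussianReal 0 1) (Set.Iic y) := by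
    have hpos : 0 < (gaussianReal 0 1) (Set.Ioc x y) := by
      rw [pos_iff_ne_zero]
      intro h0
      have := gaussianReal_absolutelyContinuous' 0 one_ne_zero h0
      rw [Real.volume_Ioc] at this
      simp only [ENNReal.ofReal_eq_zero, sub_nonpos] at this
      exact absurd this (not_le.2 hxy)
    have hunion : Set.Iic x ∪ Set.Ioc x y = Set.Iic y := Set.Iic_union_Ioc_eq_Iic hxy.le
    have hdisj : Disjoint (Set.Iic x) (Set.Ioc x y) := by
      rw [Set.disjoint_left]
      intro a ha hb
      exact absurd hb.1 (not_lt.2 ha)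
    have := measure_union hdisj measurableSet_Ioc (μ := gaussianReal 0 1)
    rw [hunion] at this
    rw [this]
    have hfin : (gaussianReal 0 1) (Set.Iic x) ≠ ⊤ := measure_ne_top _ _
    exact ENNReal.lt_add_right hfin hpos.ne'
  unfold stdNormalCDF
  rw [cdf_eq_real, cdf_eq_real, measureReal_def, measureReal_def]
  exact ENNReal.toReal_lt_toReal (measure_ne_top _ _) (measure_ne_top _ _) |>.2 hlt

lemma stdNormalCDF_surj_on {p : ℝ} (hp0 : 0 < p) (hp1 : p < 1) :
    ∃ z, stdNormalCDF z = p := by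
  have hbot : Filter.Tendsto stdNormalCDF Filter.atBot (nhds 0) := by
    rw [stdNormalCDF_eq]; exact tendsto_cdf_atBot _
  have htop : Filter.Tendsto stdNormalCDF Filter.atTop (nhds 1) := by
    rw [stdNormalCDF_eq]; exact tendsto_cdf_atTop _
  obtain ⟨a, ha⟩ := (hbot.eventually_lt_const hp0).exists
  obtain ⟨c, hc⟩ := (htop.eventually_const_lt hp1).exists
  have := intermediate_value_univ a c (stdNormalCDF_continuous)
  have hmem : p ∈ Set.Icc (stdNormalCDF a) (stdNormalCDF c) := ⟨ha.le, hc.le⟩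
  obtain ⟨z, hz⟩ := this hmem
  exact ⟨z, hz⟩

/-- The chance-constrained feasibility set `{x : P(x + ξ ∈ P) ≥ 1-η}` is contained in the
polytope `P_m = {x : ωᵢᵀx ≤ bᵢ - ‖Σ^{1/2}ωᵢ‖₂ Φ⁻¹(1-η) ∀i}`; hence adding the constraint
`x ∈ P_m` does not change the set of optimal solutions of the chance-constrained problem. -/
theorem feasible_subset_Pm_and_argmin_invariant {n J : ℕ} {Ω : Type*} [MeasurableSpace Ω]
    (P : Measure Ω) [IsProbabilityMeasure P]
    (S : Matrix (Fin n) (Fin n) ℝ) (hS : S.PosDef)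
    (ξ : Ω → Fin n → ℝ)
    (hξ : ∀ v : Fin n → ℝ,
      Measure.map (fun a => ∑ i, v i * ξ a i) P
        = gaussianReal 0 (∑ i, (hS.posSemidef.sqrt.mulVec v i) ^ 2).toNNReal)
    (ω : Fin J → Fin n → ℝ) (hω : ∀ i, ω i ≠ 0) (b : Fin J → ℝ)
    (η : ℝ) (hη₀ : 0 < η) (hη₁ : η ≤ 1 / 2)
    (F Pm : Set (Fin n → ℝ))
    (hF : F = {x | 1 - η ≤ (P {a | ∀ i, ∑ k, ω i k * (x k + ξ a k) ≤ b i}).toReal})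
    (hPm : Pm = {x | ∀ i, ∑ k, ω i k * x k
        ≤ b i - Real.sqrt (∑ k, (hS.posSemidef.sqrt.mulVec (ω i) k) ^ 2)
                  * stdNormalQuantile (1 - η)}) :
    F ⊆ Pm ∧
      ∀ cost : (Fin n → ℝ) → ℝ,
        {x ∈ F ∩ Pm | ∀ y ∈ F ∩ Pm, cost x ≤ cost y}
          = {x ∈ F | ∀ y ∈ F, cost x ≤ cost y} := by
  -- quantile facts
  have hp0 : (0 : ℝ) < 1 - η := by linarith
  have hp1 : 1 - η < 1 := by linarith
  obtain ⟨z, hz⟩ := stdNormalCDF_surj_on hp0 hp1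
  have hq : stdNormalCDF (stdNormalQuantile (1 - η)) = 1 - η :=
    Function.invFun_eq ⟨z, hz⟩
  have hsub : F ⊆ Pm := by
    intro x hx
    rw [hF] at hx
    rw [hPm]
    intro i
    set s : ℝ := ∑ k, (hS.posSemidef.sqrt.mulVec (ω i) k) ^ 2 with hs_def
    -- positivity of s
    have hs_pos : 0 < s := by
      rcases lt_or_eq_of_le (Finset.sum_nonneg fun k _ => sq_nonneg
        (hS.posSemidef.sqrt.mulVec (ω i) k)) with h | h
      · exact h
      · exfalso
        have hzero : hS.posSemidef.sqrt.mulVec (ω i) = 0 := by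
          funext k
          have := (Finset.sum_eq_zero_iff_of_nonneg (fun k _ => sq_nonneg
            (hS.posSemidef.sqrt.mulVec (ω i) k))).1 h.symm k (Finset.mem_univ k)
          exact pow_eq_zero_iff (two_ne_zero) |>.1 this
        have hSmul : S.mulVec (ω i) = 0 := by
          have : S = hS.posSemidef.sqrt * hS.posSemidef.sqrt :=
            (posSemidef_sqrt_mul_self' hS.posSemidef).symm
          rw [this, ← Matrix.mulVec_mulVec, hzero, Matrix.mulVec_zero]
        have := hS.dotProduct_mulVec_pos (hω i)
        rw [hSmul] at this
        simp [dotProduct_zero] at this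
    set σ : ℝ := Real.sqrt s with hσ_def
    have hσ : 0 < σ := Real.sqrt_pos.2 hs_pos
    set t : ℝ := b i - ∑ k, ω i k * x k with ht_def
    -- event inclusion
    have hsubev : {a | ∀ j, ∑ k, ω j k * (x k + ξ a k) ≤ b j}
        ⊆ {a | ∑ k, ω i k * ξ a k ≤ t} := by
      intro a ha
      have := ha i
      simp only [mul_add, Finset.sum_add_distrib] at this
      simp only [Set.mem_setOf_eq, ht_def]
      linarith
    have hmono : (P {a | ∀ j, ∑ k, ω j k * (x k + ξ a k) ≤ b j}).toReal
        ≤ (P {a | ∑ k, ω i k * ξ a k ≤ t}).toReal :=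
      ENNReal.toReal_mono (measure_ne_top _ _) (measure_mono hsubev)
    -- the law of the linear functional
    have hmap := hξ (ω i)
    have haem : AEMeasurable (fun a => ∑ k, ω i k * ξ a k) P := by
      by_contra h
      rw [Measure.map_of_not_aemeasurable h] at hmap
      have : (0 : Measure ℝ) Set.univ = (gaussianReal 0 s.toNNReal) Set.univ := by
        rw [hmap]
      simp at this
    have hPB : P {a | ∑ k, ω i k * ξ a k ≤ t}
        = (gaussianReal 0 s.toNNReal) (Set.Iic t) := by
      have : {a | ∑ k, ω i k * ξ a k ≤ t}
          = (fun a => ∑ k, ω i k * ξ a k) ⁻¹' (Set.Iic t) := rfl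
      rw [this, ← Measure.map_apply_of_aemeasurable haem measurableSet_Iic, hmap]
    -- scaling of the gaussian
    have hvar : (⟨σ ^ 2, sq_nonneg σ⟩ : NNReal) * 1 = s.toNNReal := by
      ext
      simp [hσ_def, Real.sq_sqrt hs_pos.le, Real.coe_toNNReal _ hs_pos.le]
    have hscale : gaussianReal 0 s.toNNReal
        = Measure.map (fun y => σ * y) (gaussianReal 0 1) := by
      rw [show (fun y => σ * y) = (σ * ·) from rfl, gaussianReal_map_const_mul σ, mul_zero]
      congr 1; exact hvar.symm
    have hpre : (fun y => σ * y) ⁻¹' (Set.Iic t) = Set.Iic (t / σ) := by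
      ext y
      simp only [Set.mem_preimage, Set.mem_Iic]
      rw [le_div_iff₀ hσ, mul_comm]
    have hPB2 : (gaussianReal 0 s.toNNReal) (Set.Iic t)
        = (gaussianReal 0 1) (Set.Iic (t / σ)) := by
      rw [hscale, Measure.map_apply (measurable_const_mul σ) measurableSet_Iic, hpre]
    have hcdf : (P {a | ∑ k, ω i k * ξ a k ≤ t}).toReal = stdNormalCDF (t / σ) := by
      rw [hPB, hPB2]
      unfold stdNormalCDF
      rw [cdf_eq_real, measureReal_def]
    have hge : 1 - η ≤ stdNormalCDF (t / σ) := by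
      rw [← hcdf]; exact le_trans hx hmono
    have hqle : stdNormalQuantile (1 - η) ≤ t / σ := by
      by_contra h
      push_neg at h
      have := stdNormalCDF_strictMono h
      rw [hq] at this
      linarith
    have : σ * stdNormalQuantile (1 - η) ≤ t := by
      rw [mul_comm]
      exact (le_div_iff₀ hσ).1 hqle
    show ∑ k, ω i k * x k ≤ _
    rw [ht_def] at this
    linarith
  refine ⟨hsub, fun cost => ?_⟩
  rw [Set.inter_eq_left.2 hsub]
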